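/- Let φ₀ ∈ M be a local minimizer or a local maximizer of E restricted to M (i.e. there is a neighborhood U of φ₀ in X such that E(φ₀) ≤ E(φ) for all φ ∈ M ∩ U, or E(φ₀) ≥ E(φ) for all φ ∈ M ∩ U). If φ₀ ∉ M⁰, then φ₀ is a critical point of E, i.e. the Fréchet derivative E'(φ₀) is the zero functional on X. -/

import Mathlib

/-- If `φ₀` is a local minimizer or local maximizer of a `C¹` functional `E` restricted to the
Nehari manifold `M = {φ ≠ 0 : I(φ) = 0}` (where `I(φ) = E'(φ)(φ)`) and `φ₀` does not lie in the
degenerate set `M⁰ = {φ ∈ M | fderiv ℝ I φ φ = 0}`, then `φ₀` is a critical point of `E`. -/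
theorem statement_6 {X : Type*} [NormedAddCommGroup X] [NormedSpace ℝ X] [CompleteSpace X]
    (E : X → ℝ) (hE : ContDiff ℝ 1 E)
    (I : X → ℝ) (hIdef : ∀ φ : X, I φ = fderiv ℝ E φ φ)
    (hI : ContDiff ℝ 1 I)
    (M : Set X) (hM : M = {φ : X | φ ≠ 0 ∧ I φ = 0})
    (M0 : Set X) (hM0 : M0 = {φ ∈ M | fderiv ℝ I φ φ = 0})
    (φ₀ : X) (hφ₀ : φ₀ ∈ M)
    (hloc : ∃ U ∈ nhds φ₀,
      (∀ φ ∈ M ∩ U, E φ₀ ≤ E φ) ∨ (∀ φ ∈ M ∩ U, E φ ≤ E φ₀))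
    (hnotdeg : φ₀ ∉ M0) :
    fderiv ℝ E φ₀ = 0 := by
  subst hM hM0
  obtain ⟨hne, hI0⟩ := hφ₀
  obtain ⟨U, hU, hor⟩ := hloc
  have hmem : ∀ᶠ x in nhdsWithin φ₀ {x | I x = I φ₀},
      x ∈ {φ : X | φ ≠ 0 ∧ I φ = 0} ∩ U := by
    have hU' : ∀ᶠ x in nhds φ₀, x ∈ U := hU
    have h1 : ∀ᶠ x in nhds φ₀, x ∈ U ∧ x ≠ 0 :=
      hU'.and (isOpen_compl_singleton.eventually_mem hne)
    filter_upwards [nhdsWithin_le_nhds h1, self_mem_nhdsWithin] with x hx hx'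
    exact ⟨⟨hx.2, by simpa [hI0] using hx'⟩, hx.1⟩
  have hextr : IsLocalExtrOn E {x | I x = I φ₀} φ₀ := by
    rcases hor with h | h
    · left; filter_upwards [hmem] with x hx using h x hx
    · right; filter_upwards [hmem] with x hx using h x hx
  obtain ⟨a, b, hab, heq⟩ := hextr.exists_multipliers_of_hasStrictFDerivAt_1d
    (hI.contDiffAt.hasStrictFDerivAt one_ne_zero) (hE.contDiffAt.hasStrictFDerivAt one_ne_zero)
  have hEφ₀ : fderiv ℝ E φ₀ φ₀ = 0 := by rw [← hIdef]; exact hI0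
  have heval := congrFun (congrArg DFunLike.coe heq) φ₀
  simp only [ContinuousLinearMap.add_apply, ContinuousLinearMap.coe_smul',
    Pi.smul_apply, smul_eq_mul, ContinuousLinearMap.zero_apply, hEφ₀, mul_zero, add_zero] at heval
  have hIne : fderiv ℝ I φ₀ φ₀ ≠ 0 := fun h => hnotdeg ⟨⟨hne, hI0⟩, h⟩
  have ha : a = 0 := by
    rcases mul_eq_zero.1 heval with h | h
    · exact h
    · exact absurd h hIne
  have hb : b ≠ 0 := by
    intro hb
    exact hab (by simp [ha, hb, Prod.ext_iff])
  have hb0 : b • fderiv ℝ E φ₀ = 0 := by rw [ha, zero_smul, zero_add] at heq; exact heq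
  ext x
  have hx := congrFun (congrArg DFunLike.coe hb0) x
  simp only [ContinuousLinearMap.coe_smul', Pi.smul_apply, smul_eq_mul,
    ContinuousLinearMap.zero_apply] at hx
  simpa using (mul_eq_zero.1 hx).resolve_left hb
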